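/- The matrix function N is analytic on ℂ ∖ (−∞, 0] and solves the outer-parametrix Riemann–Hilbert problem: (i) for every x ∈ (−1, 0), the limits N₊(x) := lim_{ε→0⁺} N(x+iε) and N₋(x) := lim_{ε→0⁺} N(x−iε) exist and N₊(x) = N₋(x)·diag(e^{iαπ}, e^{−iαπ}); (ii) for every x < −1, the limits N₊(x) and N₋(x) (from the upper and lower half-planes) exist and N₊(x) = N₋(x)·[[0,1],[−1,0]]; (iii) N(z)·((I − iσ1)/√2)·diag(z^{1/4}, z^{−1/4}) → I as |z| → ∞ with z ∈ ℂ ∖ (−∞, 0], where z^{±1/4} are principal branches. -/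

import Mathlib

open Complex Set Filter Topology Matrix

/-- The Szegő-type function `D(z) = (((z+1)^{1/2} + 1)/((z+1)^{1/2} − 1))^{−α/2}`,
with all powers taken as principal branches. -/
noncomputable def DFun (α : ℝ) (z : ℂ) : ℂ :=
  ((((z + 1) ^ ((1 : ℂ) / 2) + 1) / ((z + 1) ^ ((1 : ℂ) / 2) - 1)) ^ (-(α : ℂ) / 2))

/-- The outer parametrix
`N(z) = [[1,0],[iα,1]] · diag((z+1)^{−1/4}, (z+1)^{1/4}) · (I + iσ₁)/√2 · diag(D(z), D(z)⁻¹)`. -/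
noncomputable def NFun (α : ℝ) (z : ℂ) : Matrix (Fin 2) (Fin 2) ℂ :=
  !![1, 0; (α : ℂ) * Complex.I, 1] *
    !![(z + 1) ^ (-(1 : ℂ) / 4), 0; 0, (z + 1) ^ ((1 : ℂ) / 4)] *
    ((1 / (Real.sqrt 2 : ℂ)) • !![1, Complex.I; Complex.I, 1]) *
    !![DFun α z, 0; 0, (DFun α z)⁻¹]


noncomputable def wF (z : ℂ) : ℂ := (z + 1) ^ ((1:ℂ)/2)
noncomputable def rF (z : ℂ) : ℂ := (wF z + 1) / (wF z - 1)

lemma slit_eq : {z : ℂ | ¬(z.im = 0 ∧ z.re ≤ 0)} = Complex.slitPlane := by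
  ext z; simp only [mem_setOf_eq, Complex.mem_slitPlane_iff, not_and_or, not_le]; tauto

section Sqrt
variable {ξ : ℂ}

lemma sqrt_arg_im (hξ : ξ ≠ 0) :
    (ξ ^ ((1:ℂ)/2)).im = Real.exp ((Complex.log ξ).re / 2) * Real.sin (ξ.arg / 2) ∧
    (ξ ^ ((1:ℂ)/2)).re = Real.exp ((Complex.log ξ).re / 2) * Real.cos (ξ.arg / 2) := by
  have h1 : (Complex.log ξ * (1/2)).re = (Complex.log ξ).re / 2 := by
    simp [Complex.mul_re]; ring
  have h2 : (Complex.log ξ * (1/2)).im = ξ.arg / 2 := by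
    simp [Complex.mul_im, Complex.log_im]; ring
  rw [Complex.cpow_def_of_ne_zero hξ, Complex.exp_im, Complex.exp_re, h1, h2]
  exact ⟨rfl, rfl⟩

lemma sqrt_re_pos (h : ξ ∈ Complex.slitPlane) : 0 < (ξ ^ ((1:ℂ)/2)).re := by
  rw [(sqrt_arg_im (Complex.slitPlane_ne_zero h)).2]
  have h1 : -Real.pi < ξ.arg := Complex.neg_pi_lt_arg ξ
  have h2 : ξ.arg < Real.pi := Complex.arg_lt_pi_iff.2 (by
    rcases Complex.mem_slitPlane_iff.1 h with h | h
    exacts [Or.inl h.le, Or.inr h])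
  have := Real.pi_pos
  exact mul_pos (Real.exp_pos _) (Real.cos_pos_of_mem_Ioo ⟨by linarith, by linarith⟩)

lemma sqrt_im_pos (him : 0 < ξ.im) : 0 < (ξ ^ ((1:ℂ)/2)).im := by
  have hξ : ξ ≠ 0 := fun h => by simp [h] at him
  rw [(sqrt_arg_im hξ).1]
  have h1 : 0 ≤ ξ.arg := Complex.arg_nonneg_iff.2 him.le
  have h0 : ξ.arg ≠ 0 := fun h => by
    rcases Complex.arg_eq_zero_iff.1 h with ⟨_, h2⟩; exact him.ne' h2
  have h2 : ξ.arg ≤ Real.pi := Complex.arg_le_pi ξ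
  have := Real.pi_pos
  exact mul_pos (Real.exp_pos _) (Real.sin_pos_of_pos_of_lt_pi
    (by cases h1.lt_or_eq with | inl h => linarith | inr h => exact absurd h.symm h0)
    (by linarith))

lemma sqrt_im_neg (him : ξ.im < 0) : (ξ ^ ((1:ℂ)/2)).im < 0 := by
  have hξ : ξ ≠ 0 := fun h => by simp [h] at him
  rw [(sqrt_arg_im hξ).1]
  have h1 : ξ.arg < 0 := Complex.arg_neg_iff.2 him
  have h2 : -Real.pi < ξ.arg := Complex.neg_pi_lt_arg ξ
  exact mul_neg_of_pos_of_neg (Real.exp_pos _)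
    (Real.sin_neg_of_neg_of_neg_pi_lt (by linarith) (by linarith))

lemma sqrt_im_zero (him : ξ.im = 0) (hre : 0 < ξ.re) : (ξ ^ ((1:ℂ)/2)).im = 0 := by
  have hξ : ξ ≠ 0 := fun h => by simp [h] at hre
  rw [(sqrt_arg_im hξ).1, Complex.arg_eq_zero_iff.2 ⟨hre.le, him⟩]
  simp

lemma sqrt_mul_self (hξ : ξ ≠ 0) : ξ ^ ((1:ℂ)/2) * ξ ^ ((1:ℂ)/2) = ξ := by
  rw [← Complex.cpow_add _ _ hξ]; norm_num

end Sqrt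

section SlitFacts
variable {z : ℂ} (hz : z ∈ Complex.slitPlane)

lemma add_one_ne_zero' (hz : z ∈ Complex.slitPlane) : z + 1 ≠ 0 := by
  intro h
  have : z = -1 := by linear_combination h
  rw [this] at hz
  simp [Complex.mem_slitPlane_iff] at hz; linarith

lemma add_one_slit (hz : z ∈ Complex.slitPlane) : z + 1 ∈ Complex.slitPlane := by
  rcases Complex.mem_slitPlane_iff.1 hz with h | h
  · exact Complex.mem_slitPlane_iff.2 (Or.inl (by simp; linarith))
  · exact Complex.mem_slitPlane_iff.2 (Or.inr (by simpa using h))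

lemma wF_ne_one (hz : z ∈ Complex.slitPlane) : wF z ≠ 1 := by
  intro h
  have h2 : z + 1 = 1 := by
    have := sqrt_mul_self (add_one_ne_zero' hz)
    rw [show (z+1) ^ ((1:ℂ)/2) = wF z from rfl, h] at this
    simpa using this.symm
  have : z = 0 := by linear_combination h2
  rw [this] at hz
  simp [Complex.mem_slitPlane_iff] at hz

lemma wF_sub_one_ne (hz : z ∈ Complex.slitPlane) : wF z - 1 ≠ 0 :=
  sub_ne_zero.2 (wF_ne_one hz)

lemma wF_add_one_ne (hz : z ∈ Complex.slitPlane) : wF z + 1 ≠ 0 := by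
  have h := sqrt_re_pos (add_one_slit hz)
  intro h2
  have : (wF z + 1).re = 0 := by rw [h2]; simp
  simp only [Complex.add_re, Complex.one_re] at this
  rw [show wF z = (z+1) ^ ((1:ℂ)/2) from rfl] at this
  linarith

lemma div_add_one_sub_one_im {w : ℂ} (hw : w ≠ 1) :
    ((w + 1) / (w - 1)).im = -2 * w.im / Complex.normSq (w - 1) := by
  have h : Complex.normSq (w-1) ≠ 0 := (Complex.normSq_pos.2 (sub_ne_zero.2 hw)).ne'
  rw [Complex.div_im]
  field_simp
  simp only [Complex.add_re, Complex.add_im, Complex.sub_re, Complex.sub_im, Complex.one_re,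
    Complex.one_im]
  ring

lemma div_add_one_sub_one_re {w : ℂ} (hw : w ≠ 1) :
    ((w + 1) / (w - 1)).re = (w.re ^ 2 + w.im ^ 2 - 1) / Complex.normSq (w - 1) := by
  have h : Complex.normSq (w-1) ≠ 0 := (Complex.normSq_pos.2 (sub_ne_zero.2 hw)).ne'
  rw [Complex.div_re]
  field_simp
  simp only [Complex.add_re, Complex.add_im, Complex.sub_re, Complex.sub_im, Complex.one_re,
    Complex.one_im]
  ring

lemma rF_ne_zero (hz : z ∈ Complex.slitPlane) : rF z ≠ 0 :=
  div_ne_zero (wF_add_one_ne hz) (wF_sub_one_ne hz)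

lemma rF_slit (hz : z ∈ Complex.slitPlane) : rF z ∈ Complex.slitPlane := by
  rcases eq_or_ne z.im 0 with him | him
  · have hre : 0 < z.re := by
      rcases Complex.mem_slitPlane_iff.1 hz with h | h
      exacts [h, absurd him h]
    have him1 : (z + 1).im = 0 := by simp [him]
    have hre1 : 0 < (z + 1).re := by simp; linarith
    have hwim : (wF z).im = 0 := sqrt_im_zero him1 hre1
    have hwre : 0 < (wF z).re := sqrt_re_pos (add_one_slit hz)
    have hsq : wF z * wF z = z + 1 := sqrt_mul_self (add_one_ne_zero' hz)
    have hre2 : (wF z).re ^ 2 = z.re + 1 := by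
      have := congrArg Complex.re hsq
      simp [Complex.mul_re, hwim, Complex.add_re, Complex.one_re] at this
      rw [sq, this]
    refine Complex.mem_slitPlane_iff.2 (Or.inl ?_)
    rw [show rF z = (wF z + 1)/(wF z - 1) from rfl,
      div_add_one_sub_one_re (wF_ne_one hz)]
    have h3 : 0 < Complex.normSq (wF z - 1) :=
      Complex.normSq_pos.2 (wF_sub_one_ne hz)
    have h4 : 0 < (wF z).re ^ 2 + (wF z).im ^ 2 - 1 := by
      rw [hwim, hre2]; simp; linarith
    positivity
  · have hwim : (wF z).im ≠ 0 := by
      rcases him.lt_or_gt with h | h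
      · exact (sqrt_im_neg (by simpa using h)).ne
      · exact (sqrt_im_pos (by simpa using h)).ne'
    refine Complex.mem_slitPlane_iff.2 (Or.inr ?_)
    rw [show rF z = (wF z + 1)/(wF z - 1) from rfl,
      div_add_one_sub_one_im (wF_ne_one hz)]
    have h3 : 0 < Complex.normSq (wF z - 1) :=
      Complex.normSq_pos.2 (wF_sub_one_ne hz)
    intro h
    rw [div_eq_zero_iff] at h
    rcases h with h | h
    · exact hwim (by linarith)
    · exact h3.ne' h

end SlitFacts

lemma DFun_def (α : ℝ) (z : ℂ) : DFun α z = rF z ^ (-(α : ℂ) / 2) := rfl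

lemma NFun_eq (α : ℝ) (z : ℂ) :
    NFun α z = (1 / (Real.sqrt 2 : ℂ)) •
      !![(z + 1) ^ (-(1 : ℂ) / 4) * DFun α z,
         Complex.I * (z + 1) ^ (-(1 : ℂ) / 4) * (DFun α z)⁻¹;
         (Complex.I * α * (z + 1) ^ (-(1 : ℂ) / 4) + Complex.I * (z + 1) ^ ((1 : ℂ) / 4)) * DFun α z,
         (-(α:ℂ) * (z + 1) ^ (-(1 : ℂ) / 4) + (z + 1) ^ ((1 : ℂ) / 4)) * (DFun α z)⁻¹] := by
  ext i j
  fin_cases i <;> fin_cases j <;>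
    simp [NFun, Matrix.mul_apply, Fin.sum_univ_two, Matrix.smul_apply] <;>
    ring_nf <;> simp [Complex.I_sq] <;> ring_nf

section Analytic
variable {α : ℝ} {z : ℂ}

lemma analyticAt_shift_cpow (c : ℂ) (hz : z + 1 ∈ Complex.slitPlane) :
    AnalyticAt ℂ (fun z : ℂ => (z + 1) ^ c) z :=
  (analyticAt_id.add analyticAt_const).cpow analyticAt_const hz

lemma analyticAt_wF (hz : z + 1 ∈ Complex.slitPlane) : AnalyticAt ℂ wF z :=
  analyticAt_shift_cpow _ hz

lemma analyticAt_rF (hz : z ∈ Complex.slitPlane) : AnalyticAt ℂ rF z :=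
  ((analyticAt_wF (add_one_slit hz)).add analyticAt_const).div
    ((analyticAt_wF (add_one_slit hz)).sub analyticAt_const) (wF_sub_one_ne hz)

lemma analyticAt_DFun (hz : z ∈ Complex.slitPlane) : AnalyticAt ℂ (DFun α) z := by
  have := (analyticAt_rF hz).cpow (analyticAt_const (v := -(α:ℂ)/2)) (rF_slit hz)
  exact this

lemma DFun_ne_zero (hz : z ∈ Complex.slitPlane) : DFun α z ≠ 0 := by
  rw [DFun_def, Ne, Complex.cpow_eq_zero_iff, not_and_or]
  exact Or.inl (rF_ne_zero hz)

lemma analyticAt_DFun_inv (hz : z ∈ Complex.slitPlane) :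
    AnalyticAt ℂ (fun z => (DFun α z)⁻¹) z :=
  (analyticAt_DFun hz).inv (DFun_ne_zero hz)

theorem NFun_analytic (α : ℝ) : ∀ i j : Fin 2, AnalyticOnNhd ℂ (fun z => NFun α z i j)
    {z : ℂ | ¬(z.im = 0 ∧ z.re ≤ 0)} := by
  rw [slit_eq]
  intro i j z hz
  have ha := analyticAt_shift_cpow (-(1:ℂ)/4) (add_one_slit hz)
  have hb := analyticAt_shift_cpow ((1:ℂ)/4) (add_one_slit hz)
  have hD := analyticAt_DFun (α := α) hz
  have hDi := analyticAt_DFun_inv (α := α) hz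
  fin_cases i <;> fin_cases j
  · have h : (fun z => NFun α z 0 0) =
        fun z => (1 / (Real.sqrt 2 : ℂ)) * ((z + 1) ^ (-(1 : ℂ) / 4) * DFun α z) :=
      funext fun z => by rw [NFun_eq]; simp
    exact h ▸ analyticAt_const.mul (ha.mul hD)
  · have h : (fun z => NFun α z 0 1) =
        fun z => (1 / (Real.sqrt 2 : ℂ)) *
          (Complex.I * (z + 1) ^ (-(1 : ℂ) / 4) * (DFun α z)⁻¹) :=
      funext fun z => by rw [NFun_eq]; simp
    exact h ▸ analyticAt_const.mul ((analyticAt_const.mul ha).mul hDi)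
  · have h : (fun z => NFun α z 1 0) =
        fun z => (1 / (Real.sqrt 2 : ℂ)) *
          ((Complex.I * α * (z + 1) ^ (-(1 : ℂ) / 4) + Complex.I * (z + 1) ^ ((1 : ℂ) / 4)) *
            DFun α z) :=
      funext fun z => by rw [NFun_eq]; simp
    exact h ▸ analyticAt_const.mul
      (((analyticAt_const.mul ha).add (analyticAt_const.mul hb)).mul hD)
  · have h : (fun z => NFun α z 1 1) =
        fun z => (1 / (Real.sqrt 2 : ℂ)) *
          ((-(α:ℂ) * (z + 1) ^ (-(1 : ℂ) / 4) + (z + 1) ^ ((1 : ℂ) / 4)) * (DFun α z)⁻¹) :=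
      funext fun z => by rw [NFun_eq]; simp
    exact h ▸ analyticAt_const.mul
      (((analyticAt_const.mul ha).add hb).mul hDi)

end Analytic

section Tendsto

lemma tendsto_matrix2 {β : Type*} {l : Filter β} {f g h k : β → ℂ} {A B C E : ℂ}
    (hf : Tendsto f l (𝓝 A)) (hg : Tendsto g l (𝓝 B)) (hh : Tendsto h l (𝓝 C))
    (hk : Tendsto k l (𝓝 E)) :
    Tendsto (fun x => !![f x, g x; h x, k x]) l (𝓝 !![A, B; C, E]) := by
  refine tendsto_pi_nhds.2 ?_
  intro i
  refine tendsto_pi_nhds.2 ?_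
  intro j
  fin_cases i <;> fin_cases j <;> simpa

lemma tendsto_NFun_of {α : ℝ} {φ : ℝ → ℂ} {l : Filter ℝ} {A B D : ℂ} (hD0 : D ≠ 0)
    (hA : Tendsto (fun t => (φ t + 1) ^ (-(1:ℂ)/4)) l (𝓝 A))
    (hB : Tendsto (fun t => (φ t + 1) ^ ((1:ℂ)/4)) l (𝓝 B))
    (hD : Tendsto (fun t => DFun α (φ t)) l (𝓝 D)) :
    Tendsto (fun t => NFun α (φ t)) l (𝓝 ((1 / (Real.sqrt 2 : ℂ)) •
      !![A * D, Complex.I * A * D⁻¹;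
         (Complex.I * α * A + Complex.I * B) * D, (-(α:ℂ) * A + B) * D⁻¹])) := by
  have h : (fun t => NFun α (φ t)) = fun t => (1 / (Real.sqrt 2 : ℂ)) •
      !![(φ t + 1) ^ (-(1 : ℂ) / 4) * DFun α (φ t),
         Complex.I * (φ t + 1) ^ (-(1 : ℂ) / 4) * (DFun α (φ t))⁻¹;
         (Complex.I * α * (φ t + 1) ^ (-(1 : ℂ) / 4) +
           Complex.I * (φ t + 1) ^ ((1 : ℂ) / 4)) * DFun α (φ t),
         (-(α:ℂ) * (φ t + 1) ^ (-(1 : ℂ) / 4) + (φ t + 1) ^ ((1 : ℂ) / 4)) *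
           (DFun α (φ t))⁻¹] := funext fun t => NFun_eq α (φ t)
  rw [h]
  exact (tendsto_matrix2 (hA.mul hD)
    ((tendsto_const_nhds.mul hA).mul (hD.inv₀ hD0))
    (((tendsto_const_nhds.mul hA).add (tendsto_const_nhds.mul hB)).mul hD)
    (((tendsto_const_nhds.mul hA).add hB).mul (hD.inv₀ hD0))).const_smul _

lemma tendsto_path_up (x : ℝ) :
    Tendsto (fun ε : ℝ => (x:ℂ) + ε * Complex.I) (𝓝[>] (0:ℝ)) (𝓝 (x:ℂ)) := by
  have h : Tendsto (fun ε : ℝ => (ε:ℂ)) (𝓝[>] (0:ℝ)) (𝓝 ((0:ℝ):ℂ)) :=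
    (Complex.continuous_ofReal.tendsto 0).mono_left nhdsWithin_le_nhds
  simpa using tendsto_const_nhds.add (h.mul tendsto_const_nhds)

lemma tendsto_path_down (x : ℝ) :
    Tendsto (fun ε : ℝ => (x:ℂ) - ε * Complex.I) (𝓝[>] (0:ℝ)) (𝓝 (x:ℂ)) := by
  have h : Tendsto (fun ε : ℝ => (ε:ℂ)) (𝓝[>] (0:ℝ)) (𝓝 ((0:ℝ):ℂ)) :=
    (Complex.continuous_ofReal.tendsto 0).mono_left nhdsWithin_le_nhds
  simpa using tendsto_const_nhds.sub (h.mul tendsto_const_nhds)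

lemma path_up_im (x ε : ℝ) : ((x:ℂ) + ε * Complex.I).im = ε := by simp
lemma path_down_im (x ε : ℝ) : ((x:ℂ) - ε * Complex.I).im = -ε := by simp

end Tendsto

theorem jump_one (α : ℝ) (x : ℝ) (hx : x ∈ Ioo (-1 : ℝ) 0) :
    ∃ Np Nm : Matrix (Fin 2) (Fin 2) ℂ,
      Tendsto (fun ε : ℝ => NFun α ((x : ℂ) + ε * Complex.I)) (𝓝[>] (0 : ℝ)) (𝓝 Np) ∧
      Tendsto (fun ε : ℝ => NFun α ((x : ℂ) - ε * Complex.I)) (𝓝[>] (0 : ℝ)) (𝓝 Nm) ∧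
      Np = Nm * !![Complex.exp ((α : ℂ) * Real.pi * Complex.I), 0;
        0, Complex.exp (-((α : ℂ) * Real.pi * Complex.I))] := by
  obtain ⟨hx1, hx0⟩ := hx
  set ζ : ℂ := (x:ℂ) + 1 with hζ
  have hζim : ζ.im = 0 := by simp [hζ]
  have hζre : ζ.re = x + 1 := by simp [hζ]
  have hζslit : ζ ∈ Complex.slitPlane :=
    Complex.mem_slitPlane_iff.2 (Or.inl (by rw [hζre]; linarith))
  have hζ0 : ζ ≠ 0 := Complex.slitPlane_ne_zero hζslit
  set s : ℂ := ζ ^ ((1:ℂ)/2) with hs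
  have hsim : s.im = 0 := sqrt_im_zero hζim (by rw [hζre]; linarith)
  have hsre : 0 < s.re := sqrt_re_pos hζslit
  have hss : s * s = ζ := sqrt_mul_self hζ0
  have hsre2 : s.re ^ 2 = x + 1 := by
    have h := congrArg Complex.re hss
    simp [Complex.mul_re, hsim, hζre] at h
    rw [sq, h]
  have hsre_lt : s.re < 1 := by nlinarith
  have hs1 : s ≠ 1 := by
    intro h; rw [h] at hsre_lt; simp at hsre_lt
  set r₀ : ℂ := (s + 1) / (s - 1) with hr₀
  have hr₀im : r₀.im = 0 := by rw [hr₀, div_add_one_sub_one_im hs1, hsim]; simp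
  have hr₀re : r₀.re < 0 := by
    rw [hr₀, div_add_one_sub_one_re hs1]
    apply div_neg_of_neg_of_pos
    · nlinarith
    · exact Complex.normSq_pos.2 (sub_ne_zero.2 hs1)
  -- limits of the elementary pieces
  have hz1up : Tendsto (fun ε : ℝ => ((x:ℂ) + ε * Complex.I) + 1) (𝓝[>] (0:ℝ)) (𝓝 ζ) :=
    (tendsto_path_up x).add tendsto_const_nhds
  have hz1dn : Tendsto (fun ε : ℝ => ((x:ℂ) - ε * Complex.I) + 1) (𝓝[>] (0:ℝ)) (𝓝 ζ) :=
    (tendsto_path_down x).add tendsto_const_nhds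
  have hAup : Tendsto (fun ε : ℝ => (((x:ℂ) + ε * Complex.I) + 1) ^ (-(1:ℂ)/4))
      (𝓝[>] (0:ℝ)) (𝓝 (ζ ^ (-(1:ℂ)/4))) :=
    (continuousAt_cpow_const hζslit).tendsto.comp hz1up
  have hAdn : Tendsto (fun ε : ℝ => (((x:ℂ) - ε * Complex.I) + 1) ^ (-(1:ℂ)/4))
      (𝓝[>] (0:ℝ)) (𝓝 (ζ ^ (-(1:ℂ)/4))) :=
    (continuousAt_cpow_const hζslit).tendsto.comp hz1dn
  have hBup : Tendsto (fun ε : ℝ => (((x:ℂ) + ε * Complex.I) + 1) ^ ((1:ℂ)/4))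
      (𝓝[>] (0:ℝ)) (𝓝 (ζ ^ ((1:ℂ)/4))) :=
    (continuousAt_cpow_const hζslit).tendsto.comp hz1up
  have hBdn : Tendsto (fun ε : ℝ => (((x:ℂ) - ε * Complex.I) + 1) ^ ((1:ℂ)/4))
      (𝓝[>] (0:ℝ)) (𝓝 (ζ ^ ((1:ℂ)/4))) :=
    (continuousAt_cpow_const hζslit).tendsto.comp hz1dn
  have hwup : Tendsto (fun ε : ℝ => wF ((x:ℂ) + ε * Complex.I)) (𝓝[>] (0:ℝ)) (𝓝 s) :=
    (continuousAt_cpow_const hζslit).tendsto.comp hz1up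
  have hwdn : Tendsto (fun ε : ℝ => wF ((x:ℂ) - ε * Complex.I)) (𝓝[>] (0:ℝ)) (𝓝 s) :=
    (continuousAt_cpow_const hζslit).tendsto.comp hz1dn
  -- r tendsto within half planes
  have hrup : Tendsto (fun ε : ℝ => rF ((x:ℂ) + ε * Complex.I)) (𝓝[>] (0:ℝ))
      (𝓝[{p : ℂ | p.im < 0}] r₀) := by
    rw [tendsto_nhdsWithin_iff]
    constructor
    · exact (hwup.add tendsto_const_nhds).div (hwup.sub tendsto_const_nhds)
        (sub_ne_zero.2 hs1)
    · filter_upwards [self_mem_nhdsWithin] with ε hε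
      have hwim : 0 < (wF ((x:ℂ) + ε * Complex.I)).im :=
        sqrt_im_pos (by simpa using (hε : (0:ℝ) < ε))
      have hwne : wF ((x:ℂ) + ε * Complex.I) ≠ 1 := by
        intro h; rw [h] at hwim; simp at hwim
      show (rF ((x:ℂ) + ε * Complex.I)).im < 0
      rw [show rF ((x:ℂ) + ε * Complex.I) =
        (wF ((x:ℂ) + ε * Complex.I) + 1) / (wF ((x:ℂ) + ε * Complex.I) - 1) from rfl,
        div_add_one_sub_one_im hwne]
      apply div_neg_of_neg_of_pos
      · linarith
      · exact Complex.normSq_pos.2 (sub_ne_zero.2 hwne)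
  have hrdn : Tendsto (fun ε : ℝ => rF ((x:ℂ) - ε * Complex.I)) (𝓝[>] (0:ℝ))
      (𝓝[{p : ℂ | 0 ≤ p.im}] r₀) := by
    rw [tendsto_nhdsWithin_iff]
    constructor
    · exact (hwdn.add tendsto_const_nhds).div (hwdn.sub tendsto_const_nhds)
        (sub_ne_zero.2 hs1)
    · filter_upwards [self_mem_nhdsWithin] with ε hε
      have hwim : (wF ((x:ℂ) - ε * Complex.I)).im < 0 :=
        sqrt_im_neg (by simpa using neg_neg_iff_pos.2 (Set.mem_Ioi.1 hε))
      have hwne : wF ((x:ℂ) - ε * Complex.I) ≠ 1 := by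
        intro h; rw [h] at hwim; simp at hwim
      show 0 ≤ (rF ((x:ℂ) - ε * Complex.I)).im
      rw [show rF ((x:ℂ) - ε * Complex.I) =
        (wF ((x:ℂ) - ε * Complex.I) + 1) / (wF ((x:ℂ) - ε * Complex.I) - 1) from rfl,
        div_add_one_sub_one_im hwne]
      have hN := Complex.normSq_pos.2 (sub_ne_zero.2 hwne)
      apply div_nonneg _ hN.le
      nlinarith
  have hlogup := (Complex.tendsto_log_nhdsWithin_im_neg_of_re_neg_of_im_zero
    hr₀re hr₀im).comp hrup
  have hlogdn := (Complex.tendsto_log_nhdsWithin_im_nonneg_of_re_neg_of_im_zero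
    hr₀re hr₀im).comp hrdn
  set L : ℂ := (Real.log ‖r₀‖ : ℂ) with hL
  set Dp : ℂ := Complex.exp ((L - Real.pi * Complex.I) * (-(α:ℂ)/2)) with hDp
  set Dm : ℂ := Complex.exp ((L + Real.pi * Complex.I) * (-(α:ℂ)/2)) with hDm
  have hDup : Tendsto (fun ε : ℝ => DFun α ((x:ℂ) + ε * Complex.I)) (𝓝[>] (0:ℝ)) (𝓝 Dp) := by
    have hmain : Tendsto (fun ε : ℝ =>
        Complex.exp (Complex.log (rF ((x:ℂ) + ε * Complex.I)) * (-(α:ℂ)/2)))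
        (𝓝[>] (0:ℝ)) (𝓝 Dp) :=
      (Complex.continuous_exp.tendsto _).comp (hlogup.mul_const _)
    apply hmain.congr'
    filter_upwards [self_mem_nhdsWithin] with ε hε
    have hzslit : (x:ℂ) + ε * Complex.I ∈ Complex.slitPlane :=
      Complex.mem_slitPlane_iff.2 (Or.inr (by
        rw [path_up_im]; exact ne_of_gt hε))
    rw [DFun_def, Complex.cpow_def_of_ne_zero (rF_ne_zero hzslit)]
  have hDdn : Tendsto (fun ε : ℝ => DFun α ((x:ℂ) - ε * Complex.I)) (𝓝[>] (0:ℝ)) (𝓝 Dm) := by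
    have hmain : Tendsto (fun ε : ℝ =>
        Complex.exp (Complex.log (rF ((x:ℂ) - ε * Complex.I)) * (-(α:ℂ)/2)))
        (𝓝[>] (0:ℝ)) (𝓝 Dm) :=
      (Complex.continuous_exp.tendsto _).comp (hlogdn.mul_const _)
    apply hmain.congr'
    filter_upwards [self_mem_nhdsWithin] with ε hε
    have hzslit : (x:ℂ) - ε * Complex.I ∈ Complex.slitPlane :=
      Complex.mem_slitPlane_iff.2 (Or.inr (by
        rw [path_down_im]; exact ne_of_lt (neg_neg_iff_pos.2 hε)))
    rw [DFun_def, Complex.cpow_def_of_ne_zero (rF_ne_zero hzslit)]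
  have hDp0 : Dp ≠ 0 := Complex.exp_ne_zero _
  have hDm0 : Dm ≠ 0 := Complex.exp_ne_zero _
  have hDpm : Dp = Dm * Complex.exp ((α : ℂ) * Real.pi * Complex.I) := by
    rw [hDp, hDm, ← Complex.exp_add]; congr 1; ring
  clear_value Dp Dm
  refine ⟨_, _, tendsto_NFun_of hDp0 hAup hBup hDup,
    tendsto_NFun_of hDm0 hAdn hBdn hDdn, ?_⟩
  ext i j
  fin_cases i <;> fin_cases j <;>
    simp [Matrix.mul_apply, Fin.sum_univ_two, Matrix.smul_apply, hDpm,
      Complex.exp_neg, mul_inv] <;>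
    ring

lemma exp_pi_div_two_I : Complex.exp ((Real.pi:ℂ)/2 * Complex.I) = Complex.I := by
  rw [Complex.exp_mul_I]
  simp [Complex.cos_pi_div_two, Complex.sin_pi_div_two]

lemma exp_neg_pi_I : Complex.exp (-(Real.pi:ℂ) * Complex.I) = -1 := by
  rw [neg_mul, Complex.exp_neg, Complex.exp_pi_mul_I]; norm_num

lemma tendsto_cpow_of_log {φ : ℝ → ℂ} {l : Filter ℝ} {Λ : ℂ} (c : ℂ)
    (hlog : Tendsto (fun t => Complex.log (φ t)) l (𝓝 Λ))
    (hne : ∀ᶠ t in l, φ t ≠ 0) :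
    Tendsto (fun t => φ t ^ c) l (𝓝 (Complex.exp (Λ * c))) := by
  apply ((Complex.continuous_exp.tendsto _).comp (hlog.mul_const c)).congr'
  filter_upwards [hne] with t ht
  simp only [Function.comp_apply]
  rw [Complex.cpow_def_of_ne_zero ht]

theorem jump_two (α : ℝ) (x : ℝ) (hx : x < -1) :
    ∃ Np Nm : Matrix (Fin 2) (Fin 2) ℂ,
      Tendsto (fun ε : ℝ => NFun α ((x : ℂ) + ε * Complex.I)) (𝓝[>] (0 : ℝ)) (𝓝 Np) ∧
      Tendsto (fun ε : ℝ => NFun α ((x : ℂ) - ε * Complex.I)) (𝓝[>] (0 : ℝ)) (𝓝 Nm) ∧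
      Np = Nm * !![0, 1; -1, 0] := by
  set ζ : ℂ := (x:ℂ) + 1 with hζ
  have hζim : ζ.im = 0 := by simp [hζ]
  have hζre : ζ.re < 0 := by simp [hζ]; linarith
  -- paths for z+1, within upper/lower half-planes
  have hz1up : Tendsto (fun ε : ℝ => ((x:ℂ) + ε * Complex.I) + 1) (𝓝[>] (0:ℝ))
      (𝓝[{p : ℂ | 0 ≤ p.im}] ζ) := by
    rw [tendsto_nhdsWithin_iff]
    refine ⟨(tendsto_path_up x).add tendsto_const_nhds, ?_⟩
    filter_upwards [self_mem_nhdsWithin] with ε hε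
    show (0:ℝ) ≤ (((x:ℂ) + ε * Complex.I) + 1).im
    simp; exact le_of_lt hε
  have hz1dn : Tendsto (fun ε : ℝ => ((x:ℂ) - ε * Complex.I) + 1) (𝓝[>] (0:ℝ))
      (𝓝[{p : ℂ | p.im < 0}] ζ) := by
    rw [tendsto_nhdsWithin_iff]
    refine ⟨(tendsto_path_down x).add tendsto_const_nhds, ?_⟩
    filter_upwards [self_mem_nhdsWithin] with ε hε
    show ((((x:ℂ) - ε * Complex.I) + 1)).im < 0
    simp; exact hε
  have hlogup := (Complex.tendsto_log_nhdsWithin_im_nonneg_of_re_neg_of_im_zero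
    hζre hζim).comp hz1up
  have hlogdn := (Complex.tendsto_log_nhdsWithin_im_neg_of_re_neg_of_im_zero
    hζre hζim).comp hz1dn
  set L : ℂ := (Real.log ‖ζ‖ : ℂ) with hL
  have hLim : L.im = 0 := by simp [hL]
  have hneup : ∀ᶠ ε : ℝ in 𝓝[>] (0:ℝ), ((x:ℂ) + (ε:ℂ) * Complex.I) + 1 ≠ 0 := by
    filter_upwards [self_mem_nhdsWithin] with ε hε
    intro h
    have := congrArg Complex.im h
    simp at this
    exact absurd this (ne_of_gt hε)
  have hnedn : ∀ᶠ ε : ℝ in 𝓝[>] (0:ℝ), ((x:ℂ) - (ε:ℂ) * Complex.I) + 1 ≠ 0 := by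
    filter_upwards [self_mem_nhdsWithin] with ε hε
    intro h
    have := congrArg Complex.im h
    simp at this
    exact absurd this (ne_of_gt hε)
  -- limits of the powers
  have hAup := tendsto_cpow_of_log (-(1:ℂ)/4) hlogup hneup
  have hBup := tendsto_cpow_of_log ((1:ℂ)/4) hlogup hneup
  have hwup := tendsto_cpow_of_log ((1:ℂ)/2) hlogup hneup
  have hAdn := tendsto_cpow_of_log (-(1:ℂ)/4) hlogdn hnedn
  have hBdn := tendsto_cpow_of_log ((1:ℂ)/4) hlogdn hnedn
  have hwdn := tendsto_cpow_of_log ((1:ℂ)/2) hlogdn hnedn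
  set Ap : ℂ := Complex.exp ((L + Real.pi * Complex.I) * (-(1:ℂ)/4)) with hAp_def
  set Bp : ℂ := Complex.exp ((L + Real.pi * Complex.I) * ((1:ℂ)/4)) with hBp_def
  set wp : ℂ := Complex.exp ((L + Real.pi * Complex.I) * ((1:ℂ)/2)) with hwp_def
  set Am : ℂ := Complex.exp ((L - Real.pi * Complex.I) * (-(1:ℂ)/4)) with hAm_def
  set Bm : ℂ := Complex.exp ((L - Real.pi * Complex.I) * ((1:ℂ)/4)) with hBm_def
  set wm : ℂ := Complex.exp ((L - Real.pi * Complex.I) * ((1:ℂ)/2)) with hwm_def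
  -- properties of wp, wm
  have hwp_im : 0 < wp.im := by
    rw [hwp_def, Complex.exp_im]
    have h1 : ((L + Real.pi * Complex.I) * ((1:ℂ)/2)).im = Real.pi/2 := by
      simp [Complex.mul_im, Complex.add_im, hLim]; ring
    rw [h1, Real.sin_pi_div_two]
    simpa using Real.exp_pos _
  have hwm_im : wm.im < 0 := by
    rw [hwm_def, Complex.exp_im]
    have h1 : ((L - Real.pi * Complex.I) * ((1:ℂ)/2)).im = -(Real.pi/2) := by
      simp [Complex.mul_im, Complex.sub_im, hLim]; ring
    rw [h1, Real.sin_neg, Real.sin_pi_div_two]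
    simpa using Real.exp_pos _
  have hwp1 : wp ≠ 1 := fun h => by rw [h] at hwp_im; simp at hwp_im
  have hwm1 : wm ≠ 1 := fun h => by rw [h] at hwm_im; simp at hwm_im
  have hwp_sub : wp - 1 ≠ 0 := sub_ne_zero.2 hwp1
  have hwm_sub : wm - 1 ≠ 0 := sub_ne_zero.2 hwm1
  have hwp_add : wp + 1 ≠ 0 := fun h => by
    have := congrArg Complex.im h; simp at this; exact hwp_im.ne' this
  set rp : ℂ := (wp + 1) / (wp - 1) with hrp_def
  set rm : ℂ := (wm + 1) / (wm - 1) with hrm_def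
  have hrp_im : rp.im < 0 := by
    rw [hrp_def, div_add_one_sub_one_im hwp1]
    apply div_neg_of_neg_of_pos
    · linarith
    · exact Complex.normSq_pos.2 hwp_sub
  have hrm_im : 0 < rm.im := by
    rw [hrm_def, div_add_one_sub_one_im hwm1]
    apply div_pos
    · linarith
    · exact Complex.normSq_pos.2 hwm_sub
  have hrp_slit : rp ∈ Complex.slitPlane :=
    Complex.mem_slitPlane_iff.2 (Or.inr hrp_im.ne)
  have hrm_slit : rm ∈ Complex.slitPlane :=
    Complex.mem_slitPlane_iff.2 (Or.inr hrm_im.ne')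
  have hrp0 : rp ≠ 0 := Complex.slitPlane_ne_zero hrp_slit
  -- limit of r along the paths
  have hrup : Tendsto (fun ε : ℝ => rF ((x:ℂ) + ε * Complex.I)) (𝓝[>] (0:ℝ)) (𝓝 rp) :=
    (hwup.add tendsto_const_nhds).div (hwup.sub tendsto_const_nhds) hwp_sub
  have hrdn : Tendsto (fun ε : ℝ => rF ((x:ℂ) - ε * Complex.I)) (𝓝[>] (0:ℝ)) (𝓝 rm) :=
    (hwdn.add tendsto_const_nhds).div (hwdn.sub tendsto_const_nhds) hwm_sub
  set Dp : ℂ := rp ^ (-(α:ℂ)/2) with hDp_def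
  set Dm : ℂ := rm ^ (-(α:ℂ)/2) with hDm_def
  have hDup : Tendsto (fun ε : ℝ => DFun α ((x:ℂ) + ε * Complex.I)) (𝓝[>] (0:ℝ)) (𝓝 Dp) :=
    (continuousAt_cpow_const hrp_slit).tendsto.comp hrup
  have hDdn : Tendsto (fun ε : ℝ => DFun α ((x:ℂ) - ε * Complex.I)) (𝓝[>] (0:ℝ)) (𝓝 Dm) :=
    (continuousAt_cpow_const hrm_slit).tendsto.comp hrdn
  have hDp0 : Dp ≠ 0 := by
    rw [hDp_def, Ne, Complex.cpow_eq_zero_iff, not_and_or]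
    exact Or.inl hrp0
  -- algebraic relations
  have hwm_eq : wm = -wp := by
    have h : wm = wp * Complex.exp (-(Real.pi:ℂ) * Complex.I) := by
      rw [hwm_def, hwp_def, ← Complex.exp_add]; congr 1; ring
    rw [h, exp_neg_pi_I]; ring
  have hrm_eq : rm = rp⁻¹ := by
    have hneg : -wp - 1 ≠ 0 := fun h => hwp_add (by linear_combination -h)
    rw [hrm_def, hrp_def, hwm_eq]
    field_simp
    ring
  have hargp : rp.arg ≠ Real.pi := fun h => by
    have := (Complex.arg_eq_pi_iff.1 h).2
    exact hrp_im.ne this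
  have hDm_eq : Dm = Dp⁻¹ := by
    rw [hDm_def, hDp_def, hrm_eq, Complex.inv_cpow _ _ hargp]
  have hAm_eq : Am = Complex.I * Ap := by
    have h : Am = Complex.exp ((Real.pi:ℂ)/2 * Complex.I) * Ap := by
      rw [hAm_def, hAp_def, ← Complex.exp_add]; congr 1; ring
    rw [h, exp_pi_div_two_I]
  have hBp_eq : Bp = Complex.I * Bm := by
    have h : Bp = Complex.exp ((Real.pi:ℂ)/2 * Complex.I) * Bm := by
      rw [hBp_def, hBm_def, ← Complex.exp_add]; congr 1; ring
    rw [h, exp_pi_div_two_I]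
  have hBm_eq : Bm = -Complex.I * Bp := by
    rw [hBp_eq, show -Complex.I * (Complex.I * Bm) = -(Complex.I * Complex.I) * Bm by ring,
      Complex.I_mul_I]
    ring
  have hDm0 : Dm ≠ 0 := by rw [hDm_eq]; exact inv_ne_zero hDp0
  clear_value Ap Bp Am Bm Dp Dm
  refine ⟨_, _, tendsto_NFun_of hDp0 hAup hBup hDup,
    tendsto_NFun_of hDm0 hAdn hBdn hDdn, ?_⟩
  ext i j
  fin_cases i <;> fin_cases j <;>
    simp [Matrix.mul_apply, Fin.sum_univ_two, Matrix.smul_apply, hAm_eq, hBm_eq, hDm_eq,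
      inv_inv] <;>
    ring_nf <;> simp [Complex.I_sq] <;> ring_nf

lemma I_pow_three : Complex.I ^ 3 = -Complex.I := by
  rw [show (3:ℕ) = 2 + 1 from rfl, pow_succ, Complex.I_sq]; ring

set_option maxHeartbeats 1000000 in
lemma G_eq (α : ℝ) (z : ℂ) :
    NFun α z * ((1 / (Real.sqrt 2 : ℂ)) • !![1, -Complex.I; -Complex.I, 1]) *
      !![z ^ ((1 : ℂ) / 4), 0; 0, z ^ (-(1 : ℂ) / 4)] =
    !![(1 / (Real.sqrt 2 : ℂ) * (1 / (Real.sqrt 2 : ℂ))) *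
          (z ^ ((1:ℂ)/4) * (z + 1) ^ (-(1:ℂ)/4)) * (DFun α z + (DFun α z)⁻¹),
       Complex.I * (1 / (Real.sqrt 2 : ℂ) * (1 / (Real.sqrt 2 : ℂ))) *
          ((z + 1) ^ (-(1:ℂ)/4) * z ^ (-(1:ℂ)/4)) * ((DFun α z)⁻¹ - DFun α z);
       Complex.I * (1 / (Real.sqrt 2 : ℂ) * (1 / (Real.sqrt 2 : ℂ))) *
          ((α:ℂ) * (z ^ ((1:ℂ)/4) * (z + 1) ^ (-(1:ℂ)/4)) * (DFun α z + (DFun α z)⁻¹) +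
           ((z + 1) ^ ((1:ℂ)/4) * z ^ ((1:ℂ)/4)) * (DFun α z - (DFun α z)⁻¹)),
       (1 / (Real.sqrt 2 : ℂ) * (1 / (Real.sqrt 2 : ℂ))) *
          ((α:ℂ) * ((z + 1) ^ (-(1:ℂ)/4) * z ^ (-(1:ℂ)/4)) * (DFun α z - (DFun α z)⁻¹) +
           ((z + 1) ^ ((1:ℂ)/4) * z ^ (-(1:ℂ)/4)) * (DFun α z + (DFun α z)⁻¹))] := by
  ext i j
  fin_cases i <;> fin_cases j <;>
    simp [NFun, Matrix.mul_apply, Fin.sum_univ_two, Matrix.smul_apply] <;>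
    ring_nf <;> simp [Complex.I_sq, _root_.I_pow_three] <;> ring_nf

lemma arg_sub_arg_add_one {z : ℂ} (hz : z ∈ Complex.slitPlane) :
    (z / (z + 1)).arg = z.arg - (z + 1).arg := by
  have hz0 : z ≠ 0 := Complex.slitPlane_ne_zero hz
  have hz10 : z + 1 ≠ 0 := add_one_ne_zero' hz
  have hang := Complex.arg_div_coe_angle hz0 hz10
  rw [← Real.Angle.coe_sub] at hang
  obtain ⟨k, hk⟩ := Real.Angle.angle_eq_iff_two_pi_dvd_sub.1 hang
  have hb1 : |(z / (z + 1)).arg| ≤ Real.pi := Complex.abs_arg_le_pi _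
  have hb2 : |z.arg - (z + 1).arg| < Real.pi := by
    rcases eq_or_ne z.im 0 with him | him
    · have hre : 0 < z.re := by
        rcases Complex.mem_slitPlane_iff.1 hz with h | h
        exacts [h, absurd him h]
      have h1 : z.arg = 0 := Complex.arg_eq_zero_iff.2 ⟨hre.le, him⟩
      have h2 : (z + 1).arg = 0 := Complex.arg_eq_zero_iff.2
        ⟨by simp; linarith, by simp [him]⟩
      rw [h1, h2]
      simpa using Real.pi_pos
    · have him1 : (z + 1).im = z.im := by simp
      rcases him.lt_or_gt with h | h
      · have ha1 : -Real.pi < z.arg := Complex.neg_pi_lt_arg z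
        have ha2 : z.arg < 0 := Complex.arg_neg_iff.2 h
        have hb1' : -Real.pi < (z + 1).arg := Complex.neg_pi_lt_arg _
        have hb2' : (z + 1).arg < 0 := Complex.arg_neg_iff.2 (him1 ▸ h)
        rw [abs_lt]; constructor <;> linarith
      · have ha1 : 0 < z.arg := by
          have h0 : 0 ≤ z.arg := Complex.arg_nonneg_iff.2 h.le
          rcases h0.lt_or_eq with h' | h'
          · exact h'
          · exact absurd (Complex.arg_eq_zero_iff.1 h'.symm).2 h.ne'
        have ha2 : z.arg < Real.pi := Complex.arg_lt_pi_iff.2 (Or.inr h.ne')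
        have hb1' : 0 < (z + 1).arg := by
          have h0 : 0 ≤ (z + 1).arg := Complex.arg_nonneg_iff.2 (him1 ▸ h.le)
          rcases h0.lt_or_eq with h' | h'
          · exact h'
          · exact absurd (Complex.arg_eq_zero_iff.1 h'.symm).2 (him1 ▸ h.ne')
        have hb2' : (z + 1).arg < Real.pi :=
          Complex.arg_lt_pi_iff.2 (Or.inr (him1 ▸ h.ne'))
        rw [abs_lt]; constructor <;> linarith
  have hk0 : k = 0 := by
    rw [← Int.abs_lt_one_iff]
    have hpi := Real.pi_pos
    have : |(k : ℝ)| < 1 := by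
      have h1 : |2 * Real.pi * (k:ℝ)| < 2 * Real.pi := by
        rw [← hk]
        calc |(z / (z + 1)).arg - (z.arg - (z + 1).arg)|
            ≤ |(z / (z + 1)).arg| + |z.arg - (z + 1).arg| := abs_sub _ _
          _ < 2 * Real.pi := by linarith
      rw [abs_mul, abs_of_pos (by linarith : (0:ℝ) < 2 * Real.pi)] at h1
      nlinarith [abs_nonneg (k:ℝ)]
    exact_mod_cast this
  rw [hk0] at hk
  simp at hk
  linarith [hk]

lemma log_div_add_one {z : ℂ} (hz : z ∈ Complex.slitPlane) :
    Complex.log (z / (z + 1)) = Complex.log z - Complex.log (z + 1) := by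
  have hz0 : z ≠ 0 := Complex.slitPlane_ne_zero hz
  have hz10 : z + 1 ≠ 0 := add_one_ne_zero' hz
  apply Complex.ext
  · rw [Complex.log_re, Complex.sub_re, Complex.log_re, Complex.log_re, norm_div,
      Real.log_div (norm_ne_zero_iff.2 hz0) (norm_ne_zero_iff.2 hz10)]
  · rw [Complex.log_im, Complex.sub_im, Complex.log_im, Complex.log_im]
    exact arg_sub_arg_add_one hz

theorem NFun_normalization (α : ℝ) :
    Tendsto
      (fun z : ℂ => NFun α z * ((1 / (Real.sqrt 2 : ℂ)) • !![1, -Complex.I; -Complex.I, 1]) *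
        !![z ^ ((1 : ℂ) / 4), 0; 0, z ^ (-(1 : ℂ) / 4)])
      (Filter.comap (fun z : ℂ => ‖z‖) Filter.atTop ⊓ 𝓟 {z : ℂ | ¬(z.im = 0 ∧ z.re ≤ 0)})
      (𝓝 (1 : Matrix (Fin 2) (Fin 2) ℂ)) := by
  have hK : 1 / (Real.sqrt 2 : ℂ) * (1 / (Real.sqrt 2 : ℂ)) = 1/2 := by
    have h2 : ((Real.sqrt 2 : ℝ) : ℂ) * ((Real.sqrt 2 : ℝ) : ℂ) = 2 := by
      rw [← Complex.ofReal_mul, Real.mul_self_sqrt (by norm_num)]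
      norm_num
    rw [div_mul_div_comm, h2]
    norm_num
  set L := Filter.comap (fun z : ℂ => ‖z‖) Filter.atTop ⊓
    𝓟 {z : ℂ | ¬(z.im = 0 ∧ z.re ≤ 0)} with hLdef
  have hS : ∀ᶠ z in L, z ∈ Complex.slitPlane := by
    rw [hLdef, ← slit_eq]
    exact (eventually_inf_principal).2 (Eventually.of_forall fun z hz => hz)
  have habs : Tendsto (fun z : ℂ => ‖z‖) L atTop :=
    tendsto_comap.mono_left inf_le_left
  have habs1 : Tendsto (fun z : ℂ => ‖z + 1‖) L atTop := by
    apply tendsto_atTop_mono' L (f₁ := fun z : ℂ => ‖z‖ - 1)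
    · apply Eventually.of_forall
      intro z
      have := norm_sub_le (z + 1) (1 : ℂ)
      have h2 : ‖z‖ ≤ ‖z+1‖ + 1 := by
        calc ‖z‖ = ‖(z+1) + (-1)‖ := by ring_nf
          _ ≤ ‖z+1‖ + ‖(-1 : ℂ)‖ := norm_add_le _ _
          _ = ‖z+1‖ + 1 := by simp
      simp only
      linarith
    · exact tendsto_atTop_add_const_right _ _ habs
  have hz0 : ∀ᶠ z : ℂ in L, z ≠ 0 := by
    filter_upwards [habs.eventually_ge_atTop 1] with z hz
    intro h
    rw [h] at hz
    simp at hz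
    linarith
  have hz10 : ∀ᶠ z : ℂ in L, z + 1 ≠ 0 := by
    filter_upwards [habs1.eventually_ge_atTop 1] with z hz
    intro h
    rw [h] at hz
    simp at hz
    linarith
  -- (z+1)⁻¹ → 0
  have hinv1 : Tendsto (fun z : ℂ => (z + 1)⁻¹) L (𝓝 0) := by
    rw [tendsto_zero_iff_norm_tendsto_zero]
    have := habs1.inv_tendsto_atTop
    simp only [norm_inv]; exact this
  -- z/(z+1) → 1
  have hdiv1 : Tendsto (fun z : ℂ => z / (z + 1)) L (𝓝 1) := by
    have h1 : Tendsto (fun z : ℂ => 1 - (z + 1)⁻¹) L (𝓝 1) := by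
      simpa using tendsto_const_nhds.sub hinv1
    apply h1.congr'
    filter_upwards [hz10] with z hz
    field_simp
    ring
  -- log z - log (z+1) → 0
  have hlogdiv : Tendsto (fun z : ℂ => Complex.log z - Complex.log (z + 1)) L (𝓝 0) := by
    have h1 : Tendsto (fun z : ℂ => Complex.log (z / (z + 1))) L (𝓝 0) := by
      have := hdiv1.clog (by simp [Complex.mem_slitPlane_iff])
      simpa [Complex.log_one] using this
    apply h1.congr'
    filter_upwards [hS] with z hz
    exact log_div_add_one hz
  -- u := z^{1/4} (z+1)^{-1/4} → 1
  have hu : Tendsto (fun z : ℂ => z ^ ((1:ℂ)/4) * (z + 1) ^ (-(1:ℂ)/4)) L (𝓝 1) := by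
    have h1 : Tendsto (fun z : ℂ =>
        Complex.exp ((Complex.log z - Complex.log (z + 1)) * ((1:ℂ)/4))) L (𝓝 1) := by
      have h0 := hlogdiv.mul_const ((1:ℂ)/4)
      rw [zero_mul] at h0
      have := (Complex.continuous_exp.tendsto 0).comp h0
      simpa [Function.comp_def] using this
    apply h1.congr'
    filter_upwards [hz0, hz10] with z h0 h10
    rw [Complex.cpow_def_of_ne_zero h0, Complex.cpow_def_of_ne_zero h10, ← Complex.exp_add]
    congr 1
    ring
  -- v := (z+1)^{1/4} z^{-1/4} → 1
  have hv : Tendsto (fun z : ℂ => (z + 1) ^ ((1:ℂ)/4) * z ^ (-(1:ℂ)/4)) L (𝓝 1) := by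
    have h1 : Tendsto (fun z : ℂ =>
        Complex.exp ((Complex.log z - Complex.log (z + 1)) * (-(1:ℂ)/4))) L (𝓝 1) := by
      have h0 := hlogdiv.mul_const (-(1:ℂ)/4)
      rw [zero_mul] at h0
      have := (Complex.continuous_exp.tendsto 0).comp h0
      simpa [Function.comp_def] using this
    apply h1.congr'
    filter_upwards [hz0, hz10] with z h0 h10
    rw [Complex.cpow_def_of_ne_zero h0, Complex.cpow_def_of_ne_zero h10, ← Complex.exp_add]
    congr 1
    ring
  -- q := (z+1)^{-1/4} z^{-1/4} → 0
  have hq : Tendsto (fun z : ℂ => (z + 1) ^ (-(1:ℂ)/4) * z ^ (-(1:ℂ)/4)) L (𝓝 0) := by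
    rw [tendsto_zero_iff_norm_tendsto_zero]
    have hc : (-(1:ℂ)/4) = ((-(1/4 : ℝ) : ℝ) : ℂ) := by norm_num
    have h1 : Tendsto (fun z : ℂ => ‖z+1‖ ^ (-(1/4 : ℝ))) L (𝓝 0) :=
      (tendsto_rpow_neg_atTop (by norm_num)).comp habs1
    have h2 : Tendsto (fun z : ℂ => ‖z‖ ^ (-(1/4 : ℝ))) L (𝓝 0) :=
      (tendsto_rpow_neg_atTop (by norm_num)).comp habs
    have h3 := h1.mul h2
    rw [mul_zero] at h3
    apply h3.congr
    intro z
    rw [norm_mul,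
      show ((z+1) : ℂ) ^ (-(1:ℂ)/4) = (z+1) ^ (((-(1/4:ℝ)) : ℝ) : ℂ) by norm_num,
      show (z : ℂ) ^ (-(1:ℂ)/4) = z ^ (((-(1/4:ℝ)) : ℝ) : ℂ) by norm_num,
      Complex.norm_cpow_real, Complex.norm_cpow_real]
  -- (w-1)⁻¹ → 0
  have hwabs : Tendsto (fun z : ℂ => ‖wF z‖) L atTop := by
    have h1 : Tendsto (fun z : ℂ => ‖z+1‖ ^ ((1/2 : ℝ))) L atTop :=
      (tendsto_rpow_atTop (by norm_num)).comp habs1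
    apply h1.congr
    intro z
    rw [show wF z = (z+1) ^ ((1:ℂ)/2) from rfl,
      show ((1:ℂ)/2) = (((1/2 : ℝ) : ℝ) : ℂ) by norm_num, Complex.norm_cpow_real]
  have hwsub_abs : Tendsto (fun z : ℂ => ‖wF z - 1‖) L atTop := by
    apply tendsto_atTop_mono' L (f₁ := fun z : ℂ => ‖wF z‖ - 1)
    · apply Eventually.of_forall
      intro z
      have h2 : ‖wF z‖ ≤ ‖wF z - 1‖ + 1 := by
        calc ‖wF z‖ = ‖(wF z - 1) + 1‖ := by ring_nf
          _ ≤ ‖wF z - 1‖ + ‖(1 : ℂ)‖ := norm_add_le _ _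
          _ = ‖wF z - 1‖ + 1 := by simp
      simp only
      linarith
    · exact tendsto_atTop_add_const_right _ _ hwabs
  have hwsub : Tendsto (fun z : ℂ => (wF z - 1)⁻¹) L (𝓝 0) := by
    rw [tendsto_zero_iff_norm_tendsto_zero]
    have := hwsub_abs.inv_tendsto_atTop
    simp only [norm_inv]; exact this
  -- r → 1
  have hr_t : Tendsto rF L (𝓝 1) := by
    have h1 : Tendsto (fun z : ℂ => 1 + 2 * (wF z - 1)⁻¹) L (𝓝 1) := by
      simpa using tendsto_const_nhds.add (hwsub.const_mul (2:ℂ))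
    apply h1.congr'
    filter_upwards [hS] with z hz
    have hsub := wF_sub_one_ne hz
    rw [show rF z = (wF z + 1) / (wF z - 1) from rfl]
    field_simp
    ring
  have hr_ne1 : ∀ᶠ z in L, rF z ≠ 1 := by
    filter_upwards [hS] with z hz
    intro h
    rw [show rF z = (wF z + 1) / (wF z - 1) from rfl,
      div_eq_one_iff_eq (wF_sub_one_ne hz)] at h
    have : (1:ℂ) = -1 := by linear_combination h
    norm_num at this
  have hrt1 : Tendsto rF L (𝓝[≠] (1:ℂ)) := by
    rw [tendsto_nhdsWithin_iff]
    exact ⟨hr_t, hr_ne1.mono fun z hz => hz⟩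
  -- D → 1
  have hD1 : Tendsto (fun z => DFun α z) L (𝓝 1) := by
    have h1 : Tendsto (fun y : ℂ => y ^ (-(α:ℂ)/2)) (𝓝 1) (𝓝 ((1:ℂ) ^ (-(α:ℂ)/2))) :=
      (continuousAt_cpow_const (a := (1:ℂ)) (by simp [Complex.mem_slitPlane_iff])).tendsto
    rw [Complex.one_cpow] at h1
    exact h1.comp hr_t
  -- slope → -α
  have hslope : Tendsto (fun z => (DFun α z - (DFun α z)⁻¹) / (rF z - 1)) L (𝓝 (-(α:ℂ))) := by
    set φ : ℂ → ℂ := fun t => t ^ (-(α:ℂ)/2) - t ^ ((α:ℂ)/2) with hφdef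
    have h1 : HasDerivAt φ (-(α:ℂ)) 1 := by
      have ha := (Complex.hasStrictDerivAt_cpow_const (x := (1:ℂ))
        (c := -(α:ℂ)/2) (by simp [Complex.mem_slitPlane_iff])).hasDerivAt
      have hb := (Complex.hasStrictDerivAt_cpow_const (x := (1:ℂ))
        (c := (α:ℂ)/2) (by simp [Complex.mem_slitPlane_iff])).hasDerivAt
      have h2 := ha.sub hb
      simp only [Complex.one_cpow, mul_one] at h2
      rw [show -(α:ℂ) = -(α:ℂ)/2 - (α:ℂ)/2 by ring]
      exact h2
    have h3 := hasDerivAt_iff_tendsto_slope.1 h1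
    have h4 := h3.comp hrt1
    apply h4.congr'
    filter_upwards [hS] with z hz
    have hDinv : (DFun α z)⁻¹ = rF z ^ ((α:ℂ)/2) := by
      rw [DFun_def, show -(α:ℂ)/2 = -((α:ℂ)/2) by ring, Complex.cpow_neg, inv_inv]
    simp only [Function.comp_apply, slope_def_field, hφdef]
    rw [hDinv, DFun_def]
    simp [Complex.one_cpow]
  -- p := (z+1)^{1/4} z^{1/4} (D - D⁻¹) → -2α
  have hp : Tendsto (fun z : ℂ => ((z + 1) ^ ((1:ℂ)/4) * z ^ ((1:ℂ)/4)) *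
      (DFun α z - (DFun α z)⁻¹)) L (𝓝 (-(2*(α:ℂ)))) := by
    have h1 : Tendsto (fun z : ℂ => (z ^ ((1:ℂ)/4) * (z + 1) ^ (-(1:ℂ)/4)) *
        ((DFun α z - (DFun α z)⁻¹) / (rF z - 1)) * (2 * (1 + (wF z - 1)⁻¹))) L
        (𝓝 (1 * (-(α:ℂ)) * (2 * (1 + 0)))) :=
      (hu.mul hslope).mul ((tendsto_const_nhds.add hwsub).const_mul 2)
    have h2 : (1 : ℂ) * (-(α:ℂ)) * (2 * (1 + 0)) = -(2*(α:ℂ)) := by ring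
    rw [h2] at h1
    apply h1.congr'
    filter_upwards [hS, hz0, hz10] with z hz h0 h10
    have hwsub_ne := wF_sub_one_ne hz
    have hrne : rF z - 1 ≠ 0 := by
      intro h
      have : rF z = 1 := by linear_combination h
      rw [show rF z = (wF z + 1) / (wF z - 1) from rfl, div_eq_one_iff_eq hwsub_ne] at this
      have h5 : (1:ℂ) = -1 := by linear_combination this
      norm_num at h5
    have hw4 : wF z * (z + 1) ^ (-(1:ℂ)/4) = (z + 1) ^ ((1:ℂ)/4) := by
      rw [show wF z = (z+1) ^ ((1:ℂ)/2) from rfl, ← Complex.cpow_add _ _ h10]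
      norm_num
    have hr1' : rF z - 1 = 2 / (wF z - 1) := by
      rw [show rF z = (wF z + 1) / (wF z - 1) from rfl]
      field_simp
      ring
    rw [← hw4, hr1']
    field_simp
    ring
  -- assemble
  simp only [G_eq]
  rw [show (1 : Matrix (Fin 2) (Fin 2) ℂ) = !![1, 0; 0, 1] from Matrix.one_fin_two]
  have hD1' := hD1.inv₀ one_ne_zero
  rw [inv_one] at hD1'
  apply tendsto_matrix2
  · have h := (tendsto_const_nhds
        (x := 1 / (Real.sqrt 2 : ℂ) * (1 / (Real.sqrt 2 : ℂ))) (f := L)).mul hu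
      |>.mul (hD1.add hD1')
    convert h using 2
    rw [hK]
    norm_num
  · have h := ((tendsto_const_nhds
        (x := Complex.I * (1 / (Real.sqrt 2 : ℂ) * (1 / (Real.sqrt 2 : ℂ)))) (f := L)).mul
      hq).mul (hD1'.sub hD1)
    convert h using 2
    norm_num
  · have h := (tendsto_const_nhds
        (x := Complex.I * (1 / (Real.sqrt 2 : ℂ) * (1 / (Real.sqrt 2 : ℂ)))) (f := L)).mul
      ((((tendsto_const_nhds (x := (α:ℂ)) (f := L)).mul hu).mul (hD1.add hD1')).add hp)
    convert h using 2
    ring_nf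
  · have h := (tendsto_const_nhds
        (x := 1 / (Real.sqrt 2 : ℂ) * (1 / (Real.sqrt 2 : ℂ))) (f := L)).mul
      ((((tendsto_const_nhds (x := (α:ℂ)) (f := L)).mul hq).mul (hD1.sub hD1')).add
        (hv.mul (hD1.add hD1')))
    convert h using 2
    rw [hK]
    norm_num

/-- `N` is analytic on `ℂ ∖ (−∞, 0]` and solves the outer-parametrix
Riemann–Hilbert problem. -/
theorem NFun_solves_outer_parametrix_RHP (α : ℝ) (hα : -1 < α) :
    -- analyticity on ℂ ∖ (−∞, 0]
    (∀ i j : Fin 2, AnalyticOnNhd ℂ (fun z => NFun α z i j)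
      {z : ℂ | ¬(z.im = 0 ∧ z.re ≤ 0)}) ∧
    -- (i) jump on (−1, 0)
    (∀ x ∈ Ioo (-1 : ℝ) 0, ∃ Np Nm : Matrix (Fin 2) (Fin 2) ℂ,
      Tendsto (fun ε : ℝ => NFun α ((x : ℂ) + ε * Complex.I)) (𝓝[>] (0 : ℝ)) (𝓝 Np) ∧
      Tendsto (fun ε : ℝ => NFun α ((x : ℂ) - ε * Complex.I)) (𝓝[>] (0 : ℝ)) (𝓝 Nm) ∧
      Np = Nm * !![Complex.exp ((α : ℂ) * Real.pi * Complex.I), 0;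
        0, Complex.exp (-((α : ℂ) * Real.pi * Complex.I))]) ∧
    -- (ii) jump on (−∞, −1)
    (∀ x : ℝ, x < -1 → ∃ Np Nm : Matrix (Fin 2) (Fin 2) ℂ,
      Tendsto (fun ε : ℝ => NFun α ((x : ℂ) + ε * Complex.I)) (𝓝[>] (0 : ℝ)) (𝓝 Np) ∧
      Tendsto (fun ε : ℝ => NFun α ((x : ℂ) - ε * Complex.I)) (𝓝[>] (0 : ℝ)) (𝓝 Nm) ∧
      Np = Nm * !![0, 1; -1, 0]) ∧
    -- (iii) normalization at infinity
    Tendsto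
      (fun z : ℂ => NFun α z * ((1 / (Real.sqrt 2 : ℂ)) • !![1, -Complex.I; -Complex.I, 1]) *
        !![z ^ ((1 : ℂ) / 4), 0; 0, z ^ (-(1 : ℂ) / 4)])
      (Filter.comap (fun z : ℂ => ‖z‖) Filter.atTop ⊓ 𝓟 {z : ℂ | ¬(z.im = 0 ∧ z.re ≤ 0)})
      (𝓝 (1 : Matrix (Fin 2) (Fin 2) ℂ)) :=
  ⟨NFun_analytic α, fun x hx => jump_one α x hx, fun x hx => jump_two α x hx,
    NFun_normalization α⟩
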